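/- Let G₁ and G₂ be graphs with G₂ not complete. Then thin(G₁ • G₂) ≥ ω(G₁)·thin(G₂), where • denotes the lexicographical product. -/

import Mathlib

open SimpleGraph

/-- An ordering (given by an injective rank function `f`) and a partition (given by a
coloring `c`) are consistent: for `r < s < t`, if `r, s` are in the same class and
`t` is adjacent to `r`, then `t` is adjacent to `s`. -/
def Consistent {V : Type*} (G : SimpleGraph V) (f : V → ℕ) (c : V → ℕ) : Prop :=
  ∀ r s t : V, f r < f s → f s < f t → c r = c s → G.Adj t r → G.Adj t s

/-- Strong consistency: consistency with the ordering and with its reverse. -/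
def StronglyConsistent {V : Type*} (G : SimpleGraph V) (f : V → ℕ) (c : V → ℕ) : Prop :=
  Consistent G f c ∧
    ∀ r s t : V, f r < f s → f s < f t → c s = c t → G.Adj t r → G.Adj s r

/-- The thinness of a graph. -/
noncomputable def thin {V : Type*} (G : SimpleGraph V) : ℕ :=
  sInf {k | ∃ f c : V → ℕ, Function.Injective f ∧ (∀ v, c v < k) ∧ Consistent G f c}

/-- The proper thinness of a graph. -/
noncomputable def pthin {V : Type*} (G : SimpleGraph V) : ℕ :=
  sInf {k | ∃ f c : V → ℕ, Function.Injective f ∧ (∀ v, c v < k) ∧ StronglyConsistent G f c}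

/-- Independent thinness: classes must be independent sets. -/
noncomputable def indthin {V : Type*} (G : SimpleGraph V) : ℕ :=
  sInf {k | ∃ f c : V → ℕ, Function.Injective f ∧ (∀ v, c v < k) ∧ Consistent G f c ∧
    ∀ u v : V, c u = c v → ¬ G.Adj u v}

/-- Independent proper thinness. -/
noncomputable def indpthin {V : Type*} (G : SimpleGraph V) : ℕ :=
  sInf {k | ∃ f c : V → ℕ, Function.Injective f ∧ (∀ v, c v < k) ∧ StronglyConsistent G f c ∧
    ∀ u v : V, c u = c v → ¬ G.Adj u v}

/-- Complete thinness: classes must be cliques. -/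
noncomputable def compthin {V : Type*} (G : SimpleGraph V) : ℕ :=
  sInf {k | ∃ f c : V → ℕ, Function.Injective f ∧ (∀ v, c v < k) ∧ Consistent G f c ∧
    ∀ u v : V, u ≠ v → c u = c v → G.Adj u v}

/-- Complete proper thinness. -/
noncomputable def comppthin {V : Type*} (G : SimpleGraph V) : ℕ :=
  sInf {k | ∃ f c : V → ℕ, Function.Injective f ∧ (∀ v, c v < k) ∧ StronglyConsistent G f c ∧
    ∀ u v : V, u ≠ v → c u = c v → G.Adj u v}

/-- The incompatibility graph `G_<` of a graph and an ordering: for `v < w`,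
`vw` is an edge iff there is `z > w` adjacent to `v` but not to `w`. -/
def incompat {V : Type*} (G : SimpleGraph V) (f : V → ℕ) : SimpleGraph V where
  Adj v w :=
    (f v < f w ∧ ∃ z, f w < f z ∧ G.Adj z v ∧ ¬ G.Adj z w) ∨
    (f w < f v ∧ ∃ z, f v < f z ∧ G.Adj z w ∧ ¬ G.Adj z v)
  symm := ⟨fun v w h => h.symm⟩
  loopless := ⟨fun v h => by rcases h with ⟨h, _⟩ | ⟨h, _⟩ <;> exact lt_irrefl _ h⟩

/-- The join of two graphs. -/
def joinG {V₁ V₂ : Type*} (G₁ : SimpleGraph V₁) (G₂ : SimpleGraph V₂) :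
    SimpleGraph (V₁ ⊕ V₂) where
  Adj x y := match x, y with
    | Sum.inl u, Sum.inl v => G₁.Adj u v
    | Sum.inr u, Sum.inr v => G₂.Adj u v
    | Sum.inl _, Sum.inr _ => True
    | Sum.inr _, Sum.inl _ => True
  symm := by refine ⟨?_⟩ <;> rintro (u | u) (v | v) h
             · exact G₁.adj_symm h
             · trivial
             · trivial
             · exact G₂.adj_symm h
  loopless := by refine ⟨?_⟩ <;> rintro (u | u) h
                 · exact G₁.loopless.irrefl u h
                 · exact G₂.loopless.irrefl u h

/-- A graph is complete iff all pairs of distinct vertices are adjacent. -/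
def IsCompleteGraph {V : Type*} (G : SimpleGraph V) : Prop :=
  ∀ u v : V, u ≠ v → G.Adj u v

/-- The clique number of a graph. -/
noncomputable def omegaNum {V : Type*} (G : SimpleGraph V) : ℕ :=
  sSup {n | ∃ s : Finset V, s.card = n ∧ ∀ u ∈ s, ∀ v ∈ s, u ≠ v → G.Adj u v}

/-- The independence number of a graph. -/
noncomputable def alphaNum {V : Type*} (G : SimpleGraph V) : ℕ :=
  sSup {n | ∃ s : Finset V, s.card = n ∧ ∀ u ∈ s, ∀ v ∈ s, u ≠ v → ¬ G.Adj u v}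


/-- The lexicographical product of two graphs. -/
def lexProd {V₁ V₂ : Type*} (G₁ : SimpleGraph V₁) (G₂ : SimpleGraph V₂) :
    SimpleGraph (V₁ × V₂) where
  Adj x y := G₁.Adj x.1 y.1 ∨ (x.1 = y.1 ∧ G₂.Adj x.2 y.2)
  symm := by refine ⟨?_⟩ <;> rintro x y (h | ⟨h1, h2⟩)
             · exact Or.inl h.symm
             · exact Or.inr ⟨h1.symm, h2.symm⟩
  loopless := by refine ⟨?_⟩ <;> rintro x (h | ⟨_, h⟩)
                 · exact G₁.loopless.irrefl _ h
                 · exact G₂.loopless.irrefl _ h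

lemma lexProd_adj' {V₁ V₂ : Type*} (G₁ : SimpleGraph V₁) (G₂ : SimpleGraph V₂)
    (x y : V₁ × V₂) :
    (lexProd G₁ G₂).Adj x y ↔ G₁.Adj x.1 y.1 ∨ (x.1 = y.1 ∧ G₂.Adj x.2 y.2) :=
  Iff.rfl

/-- If `G₂` is not complete, then `thin (G₁ • G₂) ≥ ω(G₁) · thin G₂`. -/
theorem thin_lexProd_ge {V₁ V₂ : Type*} [Fintype V₁] [Fintype V₂]
    (G₁ : SimpleGraph V₁) (G₂ : SimpleGraph V₂) (h : ¬ IsCompleteGraph G₂) :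
    omegaNum G₁ * thin G₂ ≤ thin (lexProd G₁ G₂) := by
  classical
  unfold IsCompleteGraph at h
  push_neg at h
  obtain ⟨a, b, hab, hnadj⟩ := h
  -- a maximum clique
  obtain ⟨s, hscard, hsclique⟩ :
      ∃ s : Finset V₁, s.card = omegaNum G₁ ∧ ∀ u ∈ s, ∀ v ∈ s, u ≠ v → G₁.Adj u v := by
    have hmem : omegaNum G₁ ∈ {n | ∃ s : Finset V₁, s.card = n ∧
        ∀ u ∈ s, ∀ v ∈ s, u ≠ v → G₁.Adj u v} := by
      apply Nat.sSup_mem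
      · exact ⟨0, ∅, rfl, by simp⟩
      · refine ⟨Fintype.card V₁, ?_⟩
        rintro n ⟨t, ht, -⟩
        exact ht ▸ Finset.card_le_univ t
    obtain ⟨t, ht1, ht2⟩ := hmem
    exact ⟨t, ht1, ht2⟩
  -- an optimal representation of the product
  obtain ⟨f, c, hfinj, hck, hcons⟩ :
      ∃ f c : V₁ × V₂ → ℕ, Function.Injective f ∧
        (∀ v, c v < thin (lexProd G₁ G₂)) ∧ Consistent (lexProd G₁ G₂) f c := by
    have hmem : thin (lexProd G₁ G₂) ∈ {k | ∃ f c : V₁ × V₂ → ℕ, Function.Injective f ∧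
        (∀ v, c v < k) ∧ Consistent (lexProd G₁ G₂) f c} := by
      apply Nat.sInf_mem
      refine ⟨Fintype.card (V₁ × V₂),
        fun w => ((Fintype.equivFin (V₁ × V₂)) w : ℕ),
        fun w => ((Fintype.equivFin (V₁ × V₂)) w : ℕ), ?_, ?_, ?_⟩
      · intro x y hxy
        exact (Fintype.equivFin (V₁ × V₂)).injective (Fin.val_injective hxy)
      · intro v; exact ((Fintype.equivFin (V₁ × V₂)) v).isLt
      · intro r sv t h1 h2 h3 h4
        have : r = sv := (Fintype.equivFin (V₁ × V₂)).injective (Fin.val_injective h3)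
        exact absurd (this ▸ h1) (lt_irrefl _)
    exact hmem
  set k := thin (lexProd G₁ G₂) with hk
  set owned : V₁ → Finset ℕ := fun u =>
    (Finset.range k).filter (fun j => ∃ w : V₁ × V₂, w.1 = u ∧ c w = j ∧
      ∀ w' : V₁ × V₂, w'.1 ∈ s → c w' = j → f w ≤ f w') with howned
  have hxy_of : ∀ u : V₁, ∀ x y : V₂, f (u, x) = f (u, y) → x = y := by
    intro u x y he
    have h2 := hfinj he
    exact (Prod.ext_iff.mp h2).2
  -- key per-copy lemma
  have key : ∀ u ∈ s, thin G₂ ≤ (owned u).card := by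
    intro u hu
    -- domination for non-owned vertices
    have hdom : ∀ x : V₂, c (u, x) ∉ owned u →
        ∀ z : V₂, f (u, x) < f (u, z) → G₂.Adj z x := by
      intro x hx z hz
      obtain ⟨w, hwmem, hwmin⟩ := Finset.exists_min_image
        (Finset.univ.filter (fun w : V₁ × V₂ => w.1 ∈ s ∧ c w = c (u, x))) f
        ⟨(u, x), by simp [hu]⟩
      simp only [Finset.mem_filter, Finset.mem_univ, true_and] at hwmem
      have hwne : w.1 ≠ u := by
        intro hw1
        apply hx
        simp only [howned, Finset.mem_filter, Finset.mem_range]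
        exact ⟨hck (u, x), w, hw1, hwmem.2, fun w' hw's hw'c =>
          hwmin w' (by simp [hw's, hw'c])⟩
      have hfw : f w < f (u, x) := by
        have hle := hwmin (u, x) (by simp [hu])
        rcases lt_or_eq_of_le hle with hlt | heq
        · exact hlt
        · exact absurd (congrArg Prod.fst (hfinj heq)) hwne
      have hadj := hcons w (u, x) (u, z) hfw hz hwmem.2
        ((lexProd_adj' G₁ G₂ (u, z) w).mpr
          (Or.inl (hsclique u hu w.1 hwmem.1 (fun he => hwne he.symm))))
      rcases (lexProd_adj' G₁ G₂ (u, z) (u, x)).mp hadj with h1 | ⟨-, h2⟩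
      · exact absurd h1 G₁.irrefl
      · exact h2
    -- owned u is nonempty
    have hone : (owned u).Nonempty := by
      by_contra hemp
      rw [Finset.not_nonempty_iff_eq_empty] at hemp
      have hD : ∀ x : V₂, c (u, x) ∉ owned u := by simp [hemp]
      have hne' : f (u, a) ≠ f (u, b) := fun he => hab (hxy_of u a b he)
      rcases lt_or_gt_of_ne hne' with hlt | hlt
      · exact hnadj (G₂.adj_symm (hdom a (hD a) b hlt))
      · exact hnadj (hdom b (hD b) a hlt)
    obtain ⟨j0, hj0⟩ := hone
    set B := (Finset.univ.sup f) + 1 with hB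
    have hfB : ∀ w : V₁ × V₂, f w < B := fun w =>
      Nat.lt_succ_of_le (Finset.le_sup (Finset.mem_univ w))
    set idx : ℕ → ℕ := fun j => ((owned u).filter (· < j)).card with hidx
    have hidxlt : ∀ j ∈ owned u, idx j < (owned u).card := by
      intro j hj
      apply Finset.card_lt_card
      rw [Finset.ssubset_iff_of_subset (Finset.filter_subset _ _)]
      exact ⟨j, hj, by simp⟩
    have hidxmono : ∀ j j' : ℕ, j ∈ owned u → j < j' → idx j < idx j' := by
      intro j j' hj hlt
      apply Finset.card_lt_card
      rw [Finset.ssubset_iff_of_subset]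
      · exact ⟨j, by simp [hj, hlt], by simp⟩
      · intro x hx
        simp only [Finset.mem_filter] at hx ⊢
        exact ⟨hx.1, hx.2.trans hlt⟩
    have hidxinj : ∀ j ∈ owned u, ∀ j' ∈ owned u, idx j = idx j' → j = j' := by
      intro j hj j' hj' he
      by_contra hne
      rcases lt_or_gt_of_ne hne with hlt | hlt
      · exact absurd he (Nat.ne_of_lt (hidxmono j j' hj hlt))
      · exact absurd he.symm (Nat.ne_of_lt (hidxmono j' j hj' hlt))
    set f' : V₂ → ℕ := fun x => (if c (u, x) ∈ owned u then 0 else B) + f (u, x) with hf'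
    set c'' : V₂ → ℕ := fun x => idx (if c (u, x) ∈ owned u then c (u, x) else j0) with hc''
    have hf'inj : Function.Injective f' := by
      intro x y he
      have h1 := hfB (u, x)
      have h2 := hfB (u, y)
      simp only [hf'] at he
      split_ifs at he with hx hy hy
      · exact hxy_of u x y (by omega)
      · exact absurd he (by omega)
      · exact absurd he (by omega)
      · exact hxy_of u x y (by omega)
    have hc''lt : ∀ x, c'' x < (owned u).card := by
      intro x
      simp only [hc'']
      split_ifs with hx
      · exact hidxlt _ hx
      · exact hidxlt _ hj0
    have hcons' : Consistent G₂ f' c'' := by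
      intro x y z hxy hyz hcxy hadj
      by_cases hy : c (u, y) ∈ owned u
      · have hx : c (u, x) ∈ owned u := by
          by_contra hx
          have hb := hfB (u, y)
          simp only [hf', if_neg hx, if_pos hy] at hxy
          omega
        have hcc : c (u, x) = c (u, y) := by
          simp only [hc'', if_pos hx, if_pos hy] at hcxy
          exact hidxinj _ hx _ hy hcxy
        have hfxy : f (u, x) < f (u, y) := by
          simp only [hf', if_pos hx, if_pos hy] at hxy
          omega
        have hmain : f (u, y) < f (u, z) → G₂.Adj z y := by
          intro hfyz
          have hadj2 := hcons (u, x) (u, y) (u, z) hfxy hfyz hcc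
            ((lexProd_adj' G₁ G₂ (u, z) (u, x)).mpr (Or.inr ⟨rfl, hadj⟩))
          rcases (lexProd_adj' G₁ G₂ (u, z) (u, y)).mp hadj2 with h1 | ⟨-, h2⟩
          · exact absurd h1 G₁.irrefl
          · exact h2
        by_cases hz : c (u, z) ∈ owned u
        · apply hmain
          simp only [hf', if_pos hy, if_pos hz] at hyz
          omega
        · rcases lt_trichotomy (f (u, y)) (f (u, z)) with hlt | heq | hgt
          · exact hmain hlt
          · exact absurd (hxy_of u y z heq ▸ hy) hz
          · exact G₂.adj_symm (hdom z hz y hgt)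
      · have hz : ¬ c (u, z) ∈ owned u := by
          by_contra hz
          have hb := hfB (u, z)
          simp only [hf', if_neg hy, if_pos hz] at hyz
          omega
        have hfyz : f (u, y) < f (u, z) := by
          simp only [hf', if_neg hy, if_neg hz] at hyz
          omega
        exact hdom y hy z hfyz
    exact Nat.sInf_le ⟨f', c'', hf'inj, hc''lt, hcons'⟩
  -- owned sets are pairwise disjoint
  have hdisj : ∀ u ∈ s, ∀ v ∈ s, u ≠ v → Disjoint (owned u) (owned v) := by
    intro u hu v hv huv
    rw [Finset.disjoint_left]
    intro j hju hjv
    simp only [howned, Finset.mem_filter, Finset.mem_range] at hju hjv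
    obtain ⟨-, w, hw1, hwc, hwmin⟩ := hju
    obtain ⟨-, w', hw'1, hw'c, hw'min⟩ := hjv
    have h1 : f w ≤ f w' := hwmin w' (hw'1 ▸ hv) hw'c
    have h2 : f w' ≤ f w := hw'min w (hw1 ▸ hu) hwc
    have hww : w = w' := hfinj (le_antisymm h1 h2)
    exact huv (by rw [← hw1, ← hw'1, hww])
  calc omegaNum G₁ * thin G₂ = ∑ _u ∈ s, thin G₂ := by
        rw [Finset.sum_const, smul_eq_mul, hscard]
    _ ≤ ∑ u ∈ s, (owned u).card := Finset.sum_le_sum key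
    _ = (s.biUnion owned).card := (Finset.card_biUnion hdisj).symm
    _ ≤ (Finset.range k).card := Finset.card_le_card (by
        intro j hj
        rw [Finset.mem_biUnion] at hj
        obtain ⟨u, -, hju⟩ := hj
        simp only [howned, Finset.mem_filter] at hju
        exact hju.1)
    _ = k := Finset.card_range k
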